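/- Let H be a complex Hilbert space, let C be a positive invertible bounded linear operator on H, and let (f_i)_{i∈ℕ} be a C-controlled frame for H with bounds A, B (0 < A ≤ B). Then (f_i) is an ordinary frame for H: for every f ∈ H, A · ‖C^{1/2}‖^{-2} · ‖f‖² ≤ ∑_i |⟪f, f_i⟫|² ≤ B · ‖C^{-1/2}‖² · ‖f‖². -/

import Mathlib

open scoped InnerProductSpace
open Complex

lemma aux_expand {H : Type*} [NormedAddCommGroup H] [InnerProductSpace ℂ H]
    (g h a b : H) (l : ℂ) :
    ⟪g, a + l•b⟫_ℂ * ⟪a + l•b, h⟫_ℂ =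
      ⟪g, a⟫_ℂ*⟪a, h⟫_ℂ + (starRingEnd ℂ) l * (⟪g, a⟫_ℂ*⟪b, h⟫_ℂ)
        + l * (⟪g, b⟫_ℂ*⟪a, h⟫_ℂ) + l * (starRingEnd ℂ) l * (⟪g, b⟫_ℂ*⟪b, h⟫_ℂ) := by
  simp only [inner_add_left, inner_add_right, inner_smul_left, inner_smul_right]
  ring

lemma aux_polar {H : Type*} [NormedAddCommGroup H] [InnerProductSpace ℂ H]
    (g h a b : H) :
    4 * (⟪g, a⟫_ℂ * ⟪b, h⟫_ℂ) =
      ⟪g, b + a⟫_ℂ * ⟪b + a, h⟫_ℂ - ⟪g, b - a⟫_ℂ * ⟪b - a, h⟫_ℂ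
        - Complex.I * (⟪g, b + Complex.I•a⟫_ℂ * ⟪b + Complex.I•a, h⟫_ℂ)
        + Complex.I * (⟪g, b - Complex.I•a⟫_ℂ * ⟪b - Complex.I•a, h⟫_ℂ) := by
  simp only [inner_add_left, inner_add_right, inner_sub_left, inner_sub_right,
    inner_smul_left, inner_smul_right, Complex.conj_I]
  ring_nf
  simp only [Complex.I_sq]
  ring

lemma aux_conj {z w : ℂ} (h1 : (z + w).im = 0) (h2 : (Complex.I * (w - z)).im = 0) :
    w = (starRingEnd ℂ) z := by
  apply Complex.ext <;> simp [Complex.ext_iff] at * <;> linarith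

set_option maxHeartbeats 3200000 in
/-- Every `C`-controlled frame (with `C` positive and invertible) is an
ordinary frame, with bounds `A·‖C^{1/2}‖⁻² ` and `B·‖C^{-1/2}‖²`.
Here `R` is the positive square root of `C` and `R'` is the positive square root of `C⁻¹`;
the paper's inner product `⟪f, g⟫` (linear in the first argument) is Mathlib's `⟪g, f⟫_ℂ`. -/
theorem controlled_frame_is_frame
    {H : Type*} [NormedAddCommGroup H] [InnerProductSpace ℂ H] [CompleteSpace H]
    (C : H →L[ℂ] H) (hC : C.IsPositive)
    (Cinv : H →L[ℂ] H) (hCr : C ∘L Cinv = 1) (hCl : Cinv ∘L C = 1)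
    (R : H →L[ℂ] H) (hR : R.IsPositive) (hRsq : R ∘L R = C)
    (R' : H →L[ℂ] H) (hR' : R'.IsPositive) (hR'sq : R' ∘L R' = Cinv)
    (f : ℕ → H) (A B : ℝ) (hA : 0 < A) (hAB : A ≤ B)
    (s : H → ℝ)
    (hFrame : ∀ x : H, HasSum (fun i => ⟪f i, x⟫_ℂ * ⟪x, C (f i)⟫_ℂ) ((s x : ℝ) : ℂ) ∧
      A * ‖x‖ ^ 2 ≤ s x ∧ s x ≤ B * ‖x‖ ^ 2) :
    ∀ x : H, ∃ t : ℝ, HasSum (fun i => ‖⟪f i, x⟫_ℂ‖ ^ 2) t ∧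
      A * (‖R‖ ^ 2)⁻¹ * ‖x‖ ^ 2 ≤ t ∧ t ≤ B * ‖R'‖ ^ 2 * ‖x‖ ^ 2 := by
  intro x
  have hCsa : ∀ a b : H, ⟪C a, b⟫_ℂ = ⟪a, C b⟫_ℂ := fun a b => by
    have h := hC.isSelfAdjoint
    rw [ContinuousLinearMap.isSelfAdjoint_iff'] at h
    conv_lhs => rw [← h]
    rw [ContinuousLinearMap.adjoint_inner_left]
  have hR'sa : ∀ a b : H, ⟪R' a, b⟫_ℂ = ⟪a, R' b⟫_ℂ := fun a b => by
    have h := hR'.isSelfAdjoint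
    rw [ContinuousLinearMap.isSelfAdjoint_iff'] at h
    conv_lhs => rw [← h]
    rw [ContinuousLinearMap.adjoint_inner_left]
  have hCinvsa : ∀ a b : H, ⟪Cinv a, b⟫_ℂ = ⟪a, Cinv b⟫_ℂ := fun a b => by
    rw [← hR'sq]; simp only [ContinuousLinearMap.comp_apply, hR'sa]
  have hCCinv : ∀ z : H, C (Cinv z) = z := fun z => by
    have := congrArg (fun T : H →L[ℂ] H => T z) hCr; simpa using this
  have hCinvC : ∀ z : H, Cinv (C z) = z := fun z => by
    have := congrArg (fun T : H →L[ℂ] H => T z) hCl; simpa using this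
  -- the basic sums
  set T : H → H → ℕ → ℂ := fun a b i => ⟪f i, a⟫_ℂ * ⟪b, C (f i)⟫_ℂ with hTdef
  have hT : ∀ z, HasSum (T z z) ((s z : ℝ) : ℂ) := fun z => (hFrame z).1
  set combo : H → H → ℂ := fun a b =>
    ((s (b+a) : ℝ) : ℂ) - ((s (b-a) : ℝ) : ℂ) - Complex.I*((s (b+Complex.I•a) : ℝ) : ℂ)
      + Complex.I*((s (b-Complex.I•a) : ℝ) : ℂ) with hcombodef
  have hcomboT : ∀ a b, HasSum (fun i => 4 * T a b i) (combo a b) := by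
    intro a b
    have h := (((hT (b+a)).sub (hT (b-a))).sub ((hT (b+Complex.I•a)).mul_left Complex.I)).add
      ((hT (b-Complex.I•a)).mul_left Complex.I)
    rw [show (fun i => T (b+a) (b+a) i - T (b-a) (b-a) i
          - Complex.I * T (b+Complex.I•a) (b+Complex.I•a) i
          + Complex.I * T (b-Complex.I•a) (b-Complex.I•a) i)
        = fun i => 4 * T a b i from funext fun i => (aux_polar (f i) (C (f i)) a b).symm] at h
    exact h
  have hex : ∀ a b, ∃ v, HasSum (T a b) v := by
    intro a b
    refine ⟨(1/4) * combo a b, ?_⟩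
    have h := (hcomboT a b).mul_left (1/4)
    rw [show (fun i => (1/4 : ℂ) * (4 * T a b i)) = T a b from funext fun i => by ring] at h
    exact h
  choose τ hτ using hex
  have hτ4 : ∀ a b, 4 * τ a b = combo a b := fun a b =>
    ((hτ a b).mul_left 4).unique (hcomboT a b)
  have hτs : ∀ z, τ z z = ((s z : ℝ) : ℂ) := fun z => (hτ z z).unique (hT z)
  -- expansion identity
  have hE : ∀ (a b : H) (l : ℂ), ((s (a + l•b) : ℝ) : ℂ)
      = ((s a : ℝ) : ℂ) + (starRingEnd ℂ) l * τ a b + l * τ b a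
        + l * (starRingEnd ℂ) l * ((s b : ℝ) : ℂ) := by
    intro a b l
    have h := ((((hT a).add ((hτ a b).mul_left ((starRingEnd ℂ) l))).add
      ((hτ b a).mul_left l)).add ((hT b).mul_left (l * (starRingEnd ℂ) l)))
    rw [show (fun i => T a a i + (starRingEnd ℂ) l * T a b i + l * T b a i
          + l * (starRingEnd ℂ) l * T b b i) = T (a+l•b) (a+l•b) from
        funext fun i => (aux_expand (f i) (C (f i)) a b l).symm] at h
    exact (hT (a+l•b)).unique h
  -- hermitian symmetry of τ
  have hherm : ∀ a b, τ b a = (starRingEnd ℂ) (τ a b) := by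
    intro a b
    have e1 := hE a b 1
    have e2 := hE a b Complex.I
    simp only [map_one, one_mul, mul_one, Complex.conj_I] at e1 e2
    apply aux_conj (z := τ a b) (w := τ b a)
    · have : τ a b + τ b a = ((s (a + (1:ℂ)•b) : ℝ) : ℂ) - ((s a : ℝ) : ℂ) - ((s b : ℝ):ℂ) := by
        linear_combination -e1
      rw [this]; simp
    · have : Complex.I * (τ b a - τ a b)
          = ((s (a + Complex.I•b) : ℝ) : ℂ) - ((s a : ℝ) : ℂ) - ((s b : ℝ):ℂ) := by
        linear_combination -e2 + ((s b : ℝ) : ℂ) * Complex.I_mul_I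
      rw [this]; simp

  -- G-form (star of diagonal)
  have hGdiag : ∀ z, HasSum (fun i => ⟪C (f i), z⟫_ℂ * ⟪z, f i⟫_ℂ) ((s z : ℝ) : ℂ) := by
    intro z
    have h := (hT z).star
    rw [show (fun i => star (T z z i)) = fun i => ⟪C (f i), z⟫_ℂ * ⟪z, f i⟫_ℂ from
      funext fun i => by
        simp only [hTdef, Complex.star_def, map_mul, inner_conj_symm]; ring] at h
    simpa using h
  have hGsum : ∀ a b, HasSum (fun i => ⟪C (f i), a⟫_ℂ * ⟪b, f i⟫_ℂ) (τ (C a) (Cinv b)) := by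
    intro a b
    have h := hτ (C a) (Cinv b)
    rw [show T (C a) (Cinv b) = fun i => ⟪C (f i), a⟫_ℂ * ⟪b, f i⟫_ℂ from funext fun i => by
      simp only [hTdef]; rw [← hCsa, hCinvsa, hCinvC]] at h
    exact h
  have hmove1 : ∀ a b, τ (C a) (Cinv b) = τ a b := by
    intro a b
    have h1 : HasSum (fun i => 4 * (⟪C (f i), a⟫_ℂ * ⟪b, f i⟫_ℂ)) (combo a b) := by
      have h := (((hGdiag (b+a)).sub (hGdiag (b-a))).sub
        ((hGdiag (b+Complex.I•a)).mul_left Complex.I)).add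
        ((hGdiag (b-Complex.I•a)).mul_left Complex.I)
      rw [show (fun i => ⟪C (f i), b+a⟫_ℂ * ⟪b+a, f i⟫_ℂ - ⟪C (f i), b-a⟫_ℂ * ⟪b-a, f i⟫_ℂ
            - Complex.I * (⟪C (f i), b+Complex.I•a⟫_ℂ * ⟪b+Complex.I•a, f i⟫_ℂ)
            + Complex.I * (⟪C (f i), b-Complex.I•a⟫_ℂ * ⟪b-Complex.I•a, f i⟫_ℂ))
          = fun i => 4 * (⟪C (f i), a⟫_ℂ * ⟪b, f i⟫_ℂ) from
        funext fun i => (aux_polar (C (f i)) (f i) a b).symm] at h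
      exact h
    have h2 : 4 * τ (C a) (Cinv b) = combo a b := ((hGsum a b).mul_left 4).unique h1
    have h3 := h2.trans (hτ4 a b).symm
    exact mul_left_cancel₀ (by norm_num : (4:ℂ) ≠ 0) h3
  -- U-form
  have hUsum : ∀ a b, HasSum (fun i => ⟪f i, a⟫_ℂ * ⟪b, f i⟫_ℂ) (τ a (Cinv b)) := by
    intro a b
    have h := hτ a (Cinv b)
    rw [show T a (Cinv b) = fun i => ⟪f i, a⟫_ℂ * ⟪b, f i⟫_ℂ from funext fun i => by
      simp only [hTdef]; rw [hCinvsa, hCinvC]] at h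
    exact h
  -- diagonal of U is real, nonneg, and sums the norms
  have hterm : ∀ (z : H) (i : ℕ), ⟪f i, z⟫_ℂ * ⟪z, f i⟫_ℂ = ((‖⟪f i, z⟫_ℂ‖^2 : ℝ) : ℂ) := by
    intro z i
    rw [← inner_conj_symm z (f i), Complex.mul_conj]
    norm_cast
    rw [Complex.normSq_eq_norm_sq]
  have hUreal : ∀ z, HasSum (fun i => ((‖⟪f i, z⟫_ℂ‖^2 : ℝ) : ℂ)) (τ z (Cinv z)) := by
    intro z
    have h := hUsum z z
    rw [show (fun i => ⟪f i, z⟫_ℂ * ⟪z, f i⟫_ℂ) = fun i => ((‖⟪f i, z⟫_ℂ‖^2 : ℝ) : ℂ) from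
      funext fun i => hterm z i] at h
    exact h
  have hNsum : ∀ z, HasSum (fun i => ‖⟪f i, z⟫_ℂ‖^2) ((τ z (Cinv z)).re) := by
    intro z
    have h1 := ((Complex.hasSum_iff _ _).mp (hUreal z)).1
    rw [show (fun i => ((((‖⟪f i, z⟫_ℂ‖^2 : ℝ)) : ℂ)).re) = fun i => ‖⟪f i, z⟫_ℂ‖^2 from
      funext fun i => by simp only [Complex.ofReal_re]] at h1
    exact h1
  have hNreal : ∀ z, τ z (Cinv z) = (((τ z (Cinv z)).re : ℝ) : ℂ) := by
    intro z
    have := (Complex.hasSum_iff _ _).mp (hUreal z)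
    have him : (τ z (Cinv z)).im = 0 := by
      have h2 := this.2
      simp only [Complex.ofReal_im] at h2
      exact (hasSum_zero.unique h2).symm
    exact Complex.ext (by simp) (by simpa using him)

  set N : H → ℝ := fun z => (τ z (Cinv z)).re with hNdef
  have hN0 : ∀ z, 0 ≤ N z := by
    intro z
    exact hasSum_le (fun i => sq_nonneg _) hasSum_zero (hNsum z)
  -- expansion for the U-form
  have hEU : ∀ (a b : H) (l : ℂ), τ (a+l•b) (Cinv (a+l•b))
      = τ a (Cinv a) + (starRingEnd ℂ) l * τ a (Cinv b) + l * τ b (Cinv a)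
        + l * (starRingEnd ℂ) l * τ b (Cinv b) := by
    intro a b l
    have h := (((hUsum a a).add ((hUsum a b).mul_left ((starRingEnd ℂ) l))).add
      ((hUsum b a).mul_left l)).add ((hUsum b b).mul_left (l * (starRingEnd ℂ) l))
    rw [show (fun i => ⟪f i, a⟫_ℂ * ⟪a, f i⟫_ℂ
          + (starRingEnd ℂ) l * (⟪f i, a⟫_ℂ * ⟪b, f i⟫_ℂ)
          + l * (⟪f i, b⟫_ℂ * ⟪a, f i⟫_ℂ)
          + l * (starRingEnd ℂ) l * (⟪f i, b⟫_ℂ * ⟪b, f i⟫_ℂ))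
        = fun i => ⟪f i, a+l•b⟫_ℂ * ⟪a+l•b, f i⟫_ℂ from
      funext fun i => (aux_expand (f i) (f i) a b l).symm] at h
    exact (hUsum (a+l•b) (a+l•b)).unique h
  -- hermitian symmetry of the U-form
  have hUherm : ∀ a b, τ b (Cinv a) = (starRingEnd ℂ) (τ a (Cinv b)) := by
    intro a b
    have e1 := hEU a b 1
    have e2 := hEU a b Complex.I
    simp only [map_one, one_mul, mul_one, Complex.conj_I] at e1 e2
    rw [hNreal a, hNreal b, hNreal (a + (1:ℂ)•b)] at e1
    rw [hNreal a, hNreal b, hNreal (a + Complex.I•b)] at e2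
    apply aux_conj (z := τ a (Cinv b)) (w := τ b (Cinv a))
    · have : τ a (Cinv b) + τ b (Cinv a)
          = ((N (a + (1:ℂ)•b) : ℝ) : ℂ) - ((N a : ℝ) : ℂ) - ((N b : ℝ):ℂ) := by
        linear_combination -e1
      rw [this]; simp
    · have : Complex.I * (τ b (Cinv a) - τ a (Cinv b))
          = ((N (a + Complex.I•b) : ℝ) : ℂ) - ((N a : ℝ) : ℂ) - ((N b : ℝ):ℂ) := by
        linear_combination -e2 + ((N b : ℝ) : ℂ) * Complex.I_mul_I
      rw [this]; simp
  -- Cauchy-Schwarz for the U-form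
  have hCS : ∀ a b, ‖τ a (Cinv b)‖^2 ≤ N a * N b := by
    intro a b
    by_cases hz : τ a (Cinv b) = 0
    · rw [hz]; simpa using mul_nonneg (hN0 a) (hN0 b)
    set z := τ a (Cinv b) with hzdef
    have key : ∀ r : ℝ, 0 ≤ (‖z‖^2 * N b) * (r * r) + (2*‖z‖^2) * r + N a := by
      intro r
      have e := hEU a b ((r:ℂ) * z)
      rw [hUherm a b, hNreal a, hNreal b, hNreal (a + ((r:ℂ)*z)•b)] at e
      have hzz : (starRingEnd ℂ) z * z = ((‖z‖ : ℂ))^2 := by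
        rw [mul_comm, Complex.mul_conj, Complex.normSq_eq_norm_sq]
        push_cast
        rfl
      have e2 : ((N (a + ((r:ℂ)*z)•b) : ℝ) : ℂ)
          = (((‖z‖^2 * N b) * (r * r) + (2*‖z‖^2) * r + N a : ℝ) : ℂ) := by
        rw [e]
        simp only [map_mul, Complex.conj_ofReal]
        push_cast
        linear_combination (2*(r:ℂ) + (r:ℂ)^2 * ((N b : ℝ) : ℂ)) * hzz
      have e3 := Complex.ofReal_injective e2
      rw [← e3]
      exact hN0 _
    have hd := discrim_le_zero key
    rw [discrim] at hd
    have hz2 : 0 < ‖z‖^2 := by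
      have := norm_pos_iff.mpr hz
      positivity
    nlinarith [hd, hz2, hN0 a, hN0 b]

  have hs0 : ∀ z, 0 ≤ s z := fun z => le_trans (by positivity) (hFrame z).2.1
  have hB0 : (0:ℝ) ≤ B := le_trans (le_of_lt hA) hAB
  have hCinvnorm : ∀ z, ‖Cinv z‖ ≤ ‖R'‖^2 * ‖z‖ := by
    intro z
    rw [← hR'sq]
    calc ‖(R' ∘L R') z‖ = ‖R' (R' z)‖ := rfl
      _ ≤ ‖R'‖ * ‖R' z‖ := R'.le_opNorm _
      _ ≤ ‖R'‖ * (‖R'‖ * ‖z‖) := by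
          have := R'.le_opNorm z
          exact mul_le_mul_of_nonneg_left this (norm_nonneg _)
      _ = ‖R'‖^2 * ‖z‖ := by ring
  have hupper : ∀ y, N y ≤ B * ‖R'‖^2 * ‖y‖^2 := by
    intro y
    have key : ∀ r : ℝ, 0 ≤ s (Cinv y) * (r*r) + (2 * N y) * r + s y := by
      intro r
      have e := hE y (Cinv y) (r : ℂ)
      rw [hherm y (Cinv y), hNreal y] at e
      have e2 : ((s (y + (r:ℂ)•(Cinv y)) : ℝ) : ℂ)
          = ((s (Cinv y) * (r*r) + (2 * N y) * r + s y : ℝ) : ℂ) := by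
        rw [e]
        simp only [Complex.conj_ofReal]
        push_cast
        ring
      have e3 := Complex.ofReal_injective e2
      rw [← e3]
      exact hs0 _
    have hd := discrim_le_zero key
    rw [discrim] at hd
    have hsy : s y ≤ B * ‖y‖^2 := (hFrame y).2.2
    have hsC : s (Cinv y) ≤ B * (‖R'‖^2 * ‖y‖)^2 := by
      refine le_trans (hFrame (Cinv y)).2.2 ?_
      have := pow_le_pow_left₀ (norm_nonneg (Cinv y)) (hCinvnorm y) 2
      exact mul_le_mul_of_nonneg_left this hB0
    have hM0 : (0:ℝ) ≤ B * ‖R'‖^2 * ‖y‖^2 := by positivity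
    have p1 : (N y)^2 ≤ s (Cinv y) * s y := by nlinarith [hd]
    have p2 : s (Cinv y) * s y ≤ (B * (‖R'‖^2 * ‖y‖)^2) * (B * ‖y‖^2) :=
      mul_le_mul hsC hsy (hs0 y) (by positivity)
    have p3 : (N y)^2 ≤ (B * ‖R'‖^2 * ‖y‖^2)^2 := by nlinarith [p1, p2]
    have := Real.sqrt_le_sqrt (le_of_lt (lt_of_le_of_lt p3 (lt_add_one _)))
    nlinarith [p3, hN0 y, hM0]

  -- norm facts for R and C
  have hCnorm : ‖C‖ ≤ ‖R‖^2 := by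
    rw [← hRsq, sq]
    exact ContinuousLinearMap.opNorm_comp_le R R
  -- moving powers of C across the form
  have hswap : ∀ a b, τ a (Cinv (C b)) = τ (C a) (Cinv b) := by
    intro a b
    rw [hCinvC, hmove1]
  have hmovek : ∀ (k : ℕ) (a b : H), τ a (Cinv ((C^k) b)) = τ ((C^k) a) (Cinv b) := by
    intro k
    induction k with
    | zero => intro a b; simp
    | succ k ih =>
        intro a b
        have e1 : (C^(k+1)) b = (C^k) (C b) := by
          rw [pow_succ]; rfl
        have e2 : (C^(k+1)) a = C ((C^k) a) := by
          rw [pow_succ']; rfl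
        rw [e1, ih a (C b), hswap ((C^k) a) b, ← e2]
  -- result HasSum and upper bound
  refine ⟨N x, hNsum x, ?_, hupper x⟩
  by_cases hx : x = 0
  · subst hx
    simpa using hN0 0
  -- chain quantities for Reid's iteration
  have hdiagval : ∀ n : ℕ, τ x (Cinv ((C^(2^(n+1))) x)) = ((N ((C^(2^n)) x) : ℝ) : ℂ) := by
    intro n
    have e1 : (C^(2^(n+1))) x = (C^(2^n)) ((C^(2^n)) x) := by
      rw [pow_succ, mul_two, pow_add]
      rfl
    rw [e1, hmovek (2^n) x ((C^(2^n)) x), hNreal]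
  have hCS2 : ∀ n : ℕ, (N ((C^(2^n)) x))^2 ≤ N x * N ((C^(2^(n+1))) x) := by
    intro n
    have h := hCS x ((C^(2^(n+1))) x)
    rw [hdiagval n] at h
    rwa [Complex.norm_real, Real.norm_eq_abs, _root_.sq_abs] at h
  have hbase : (s x)^2 ≤ N x * N ((C^(2^0)) x) := by
    have h := hCS x (C x)
    have e : τ x (Cinv (C x)) = ((s x : ℝ) : ℂ) := by rw [hCinvC, hτs]
    rw [e, Complex.norm_real, Real.norm_eq_abs, _root_.sq_abs] at h
    have e2 : (C^(2^0)) x = C x := by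
      norm_num
    rwa [e2]
  have hiter : ∀ n : ℕ, (s x)^(2^(n+1)) ≤ (N x)^(2^(n+1) - 1) * N ((C^(2^n)) x) := by
    intro n
    induction n with
    | zero => simpa using hbase
    | succ n ih =>
        have h2 := pow_le_pow_left₀ (pow_nonneg (hs0 x) _) ih 2
        have e1 : ((s x)^(2^(n+1)))^2 = (s x)^(2^(n+2)) := by
          rw [← pow_mul]
          congr 1
        have e2 : ((N x)^(2^(n+1) - 1) * N ((C^(2^n)) x))^2
            = (N x)^((2^(n+1) - 1)*2) * (N ((C^(2^n)) x))^2 := by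
          rw [mul_pow, ← pow_mul]
        rw [e1, e2] at h2
        refine le_trans h2 ?_
        have h3 := mul_le_mul_of_nonneg_left (hCS2 n) (pow_nonneg (hN0 x) ((2^(n+1) - 1)*2))
        refine le_trans h3 (le_of_eq ?_)
        have e3 : (2^(n+1) - 1)*2 + 1 = 2^(n+2) - 1 := by
          have h4 : (1:ℕ) ≤ 2^(n+1) := Nat.one_le_two_pow
          have h5 : (2:ℕ)^(n+2) = 2^(n+1) * 2 := pow_succ 2 (n+1)
          omega
        rw [← mul_assoc, ← pow_succ, e3]
  -- conclusion
  have hCne : C ≠ 0 := by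
    intro h0
    apply hx
    rw [← hCCinv x, h0]
    simp
  have hCpos : (0:ℝ) < ‖C‖ := norm_pos_iff.mpr hCne
  have hsc : s x ≤ ‖C‖ * N x := by
    by_contra hlt
    push_neg at hlt
    have hNxpos : 0 < N x := by
      rcases eq_or_lt_of_le (hN0 x) with h | h
      · exfalso
        have hb := hbase
        rw [← h] at hb
        simp only [zero_mul] at hb
        have hsxz : s x ≤ 0 := by nlinarith [hb]
        rw [← h] at hlt
        simp only [mul_zero] at hlt
        linarith
      · exact h
    set D := B * ‖R'‖^2 with hDdef
    have hD0 : 0 ≤ D := by positivity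
    set θ := s x / (‖C‖ * N x) with hθdef
    have hθ : 1 < θ := (one_lt_div (by positivity)).mpr hlt
    have hsx : s x = θ * (‖C‖ * N x) := by
      rw [hθdef, div_mul_cancel₀ _ (mul_pos hCpos hNxpos).ne']
    have hMbound : ∀ n : ℕ, θ^(2^(n+1)) ≤ D * ‖x‖^2 / N x := by
      intro n
      set K := 2^(n+1) with hKdef
      have hdb : N ((C^(2^n)) x) ≤ D * ‖x‖^2 * ‖C‖^K := by
        refine le_trans (hupper _) ?_
        have hnx : ‖(C^(2^n)) x‖ ≤ ‖C‖^(2^n) * ‖x‖ := by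
          refine le_trans ((C^(2^n)).le_opNorm x) ?_
          exact mul_le_mul_of_nonneg_right
            (norm_pow_le' C (pow_pos (by norm_num : 0 < 2) n)) (norm_nonneg x)
        have := pow_le_pow_left₀ (norm_nonneg _) hnx 2
        calc B * ‖R'‖^2 * ‖(C^(2^n)) x‖^2 ≤ B * ‖R'‖^2 * ((‖C‖^(2^n) * ‖x‖)^2) :=
              mul_le_mul_of_nonneg_left this (by positivity)
          _ = D * ‖x‖^2 * ‖C‖^K := by
              rw [mul_pow, ← pow_mul]
              have : 2^n * 2 = K := by rw [hKdef]; ring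
              rw [this]
              ring
      have hcalc : (θ^K * (N x)^K) * ‖C‖^K ≤ ((N x)^(K-1) * (D * ‖x‖^2)) * ‖C‖^K := by
        calc (θ^K * (N x)^K) * ‖C‖^K = (s x)^K := by rw [hsx, mul_pow, mul_pow]; ring
          _ ≤ (N x)^(K-1) * N ((C^(2^n)) x) := hiter n
          _ ≤ (N x)^(K-1) * (D * ‖x‖^2 * ‖C‖^K) :=
              mul_le_mul_of_nonneg_left hdb (pow_nonneg (hN0 x) _)
          _ = ((N x)^(K-1) * (D * ‖x‖^2)) * ‖C‖^K := by ring
      have hc1 := (mul_le_mul_iff_of_pos_right (pow_pos hCpos K)).mp hcalc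
      have hKpos : 1 ≤ K := Nat.one_le_two_pow
      have e4 : (N x)^K = (N x)^(K-1) * N x := by
        conv_lhs => rw [show K = (K-1)+1 by omega]
        rw [pow_succ]
      rw [e4] at hc1
      have hc2 : (θ^K * N x) * (N x)^(K-1) ≤ (D * ‖x‖^2) * (N x)^(K-1) := by
        calc (θ^K * N x) * (N x)^(K-1) = θ^K * ((N x)^(K-1) * N x) := by ring
          _ ≤ (N x)^(K-1) * (D * ‖x‖^2) := hc1
          _ = (D * ‖x‖^2) * (N x)^(K-1) := by ring
      have hc3 := (mul_le_mul_iff_of_pos_right (pow_pos hNxpos (K-1))).mp hc2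
      rw [le_div_iff₀ hNxpos]
      exact hc3
    obtain ⟨n, hn⟩ := pow_unbounded_of_one_lt (D * ‖x‖^2 / N x) hθ
    have hmono : θ^n ≤ θ^(2^(n+1)) := by
      refine pow_le_pow_right₀ (le_of_lt hθ) ?_
      exact le_of_lt (lt_of_lt_of_le (Nat.lt_two_pow_self (n := n))
        (Nat.pow_le_pow_right (by norm_num) (Nat.le_succ n)))
    linarith [hMbound n]
  have hlow : A * ‖x‖^2 ≤ ‖R‖^2 * N x := by
    calc A * ‖x‖^2 ≤ s x := (hFrame x).2.1
      _ ≤ ‖C‖ * N x := hsc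
      _ ≤ ‖R‖^2 * N x := mul_le_mul_of_nonneg_right hCnorm (hN0 x)
  have hR2 : (0:ℝ) < ‖R‖^2 := lt_of_lt_of_le hCpos hCnorm
  have e5 : A * (‖R‖^2)⁻¹ * ‖x‖^2 = A * ‖x‖^2 / ‖R‖^2 := by ring
  rw [e5, div_le_iff₀ hR2]
  linarith [hlow]
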